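/- arXiv:2503.23527 — 2 statements merged into one kernel-verified Lean document; each statement's English description precedes it below -/
import Mathlib

section
/- Explicit Green's function: for λ > -ω_0² (real), with ξ = 1 + (λ+ω_0²)/2 + (1/2)√((λ+ω_0²)(λ+ω_0²+4)), one has G_λ(x) = ξ^{-|x|}/√((λ+ω_0²)(λ+ω_0²+4)) for all x ∈ ℤ, where G_λ(x) = ∫_0^1 cos(2πux)/(λ + 4sin²(πu) + ω_0²) du. In particular ξ > 1 and G_λ decays exponentially in |x|. -/
open Real



lemma gf_int_cos (j : ℤ) : (∫ u in (0:ℝ)..1, Real.cos (2*π*j*u)) = if j = 0 then 1 else 0 := by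
  rcases eq_or_ne j 0 with hj | hj
  · simp [hj]
  · have hc : (2*π*(j:ℝ)) ≠ 0 := by
      have := Real.pi_ne_zero
      have : (j:ℝ) ≠ 0 := Int.cast_ne_zero.mpr hj
      positivity
    have : (∫ u in (0:ℝ)..1, Real.cos (2*π*j*u)) = ∫ u in (0:ℝ)..1, Real.cos ((2*π*j)*u) := by
      congr 1
    rw [this, intervalIntegral.integral_comp_mul_left Real.cos hc]
    simp only [mul_zero, mul_one, integral_cos, Real.sin_zero, sub_zero]
    have : Real.sin (2*π*j) = 0 := by
      have := Real.sin_int_mul_pi (2*j)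
      push_cast at this
      rw [show 2*π*(j:ℝ) = (2*j)*π by ring]
      push_cast
      exact this
    simp [this, hj]

lemma gf_cos_ortho (k n : ℕ) :
    (∫ u in (0:ℝ)..1, Real.cos (2*π*k*u) * Real.cos (2*π*n*u))
      = if k = n then (if n = 0 then (1:ℝ) else 1/2) else 0 := by
  have hpt : ∀ u : ℝ, Real.cos (2*π*k*u) * Real.cos (2*π*n*u)
      = (Real.cos (2*π*((k:ℤ)+n)*u) + Real.cos (2*π*((k:ℤ)-n)*u)) / 2 := by
    intro u
    have h1 := Real.cos_add (2*π*k*u) (2*π*n*u)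
    have h2 := Real.cos_sub (2*π*k*u) (2*π*n*u)
    have e1 : Real.cos (2*π*((k:ℤ)+n)*u) = Real.cos (2*π*k*u + 2*π*n*u) := by
      congr 1; push_cast; ring
    have e2 : Real.cos (2*π*((k:ℤ)-n)*u) = Real.cos (2*π*k*u - 2*π*n*u) := by
      congr 1; push_cast; ring
    rw [e1, e2, h1, h2]
    ring
  rw [intervalIntegral.integral_congr (fun u _ => hpt u)]
  have hi1 : IntervalIntegrable (fun u : ℝ => Real.cos (2*π*((k:ℤ)+n)*u)) MeasureTheory.volume 0 1 :=
    (Continuous.intervalIntegrable (by continuity) _ _)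
  have hi2 : IntervalIntegrable (fun u : ℝ => Real.cos (2*π*((k:ℤ)-n)*u)) MeasureTheory.volume 0 1 :=
    (Continuous.intervalIntegrable (by continuity) _ _)
  have g1 := gf_int_cos ((k:ℤ)+(n:ℤ))
  have g2 := gf_int_cos ((k:ℤ)-(n:ℤ))
  rw [intervalIntegral.integral_div, intervalIntegral.integral_add hi1 hi2]
  push_cast at g1 g2 ⊢
  rw [g1, g2]
  rcases eq_or_ne k n with h | h
  · subst h
    rcases eq_or_ne k 0 with h0 | h0
    · simp [h0]
    · have c1 : ¬((k:ℤ) + (k:ℤ) = 0) := by omega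
      simp [c1, h0]
  · have c2 : ¬((k:ℤ) - (n:ℤ) = 0) := by omega
    have c1 : ¬((k:ℤ) + (n:ℤ) = 0) := by omega
    simp [c1, c2, h]


lemma gf_Q_pos (r θ : ℝ) (hr : |r| < 1) : 0 < 1 - 2*r*Real.cos θ + r^2 := by
  have h1 : r * Real.cos θ ≤ |r| := by
    calc r * Real.cos θ ≤ |r * Real.cos θ| := le_abs_self _
    _ = |r| * |Real.cos θ| := abs_mul _ _
    _ ≤ |r| * 1 := by
        exact mul_le_mul_of_nonneg_left (Real.abs_cos_le_one θ) (abs_nonneg r)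
    _ = |r| := mul_one _
  nlinarith [sq_nonneg (1 - |r|), sq_abs r, abs_nonneg r]

lemma gf_poisson (r θ : ℝ) (hr : |r| < 1) :
    HasSum (fun k : ℕ => (if k = 0 then 1 else 2) * r^k * Real.cos (k*θ))
      ((1-r^2)/(1-2*r*Real.cos θ + r^2)) := by
  set z : ℂ := (r:ℂ) * Complex.exp ((θ:ℂ) * Complex.I) with hzdef
  have hzre : z.re = r * Real.cos θ := by
    simp [hzdef, Complex.mul_re]
  have hzim : z.im = r * Real.sin θ := by
    simp [hzdef, Complex.mul_im]
  have hz : ‖z‖ < 1 := by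
    have : ‖z‖ = |r| := by
      rw [hzdef, norm_mul,
        Complex.norm_exp_ofReal_mul_I, Complex.norm_real, Real.norm_eq_abs, mul_one]
    rwa [this]
  have hgeo := hasSum_geometric_of_norm_lt_one hz
  have hre := hgeo.mapL Complex.reCLM
  have hterm : ∀ k : ℕ, ((z^k).re) = r^k * Real.cos (k*θ) := by
    intro k
    have hzk : z^k = ((r^k : ℝ):ℂ) * Complex.exp ((((k:ℝ)*θ : ℝ):ℂ) * Complex.I) := by
      rw [hzdef, mul_pow, ← Complex.exp_nat_mul]
      push_cast
      ring_nf
    rw [hzk, Complex.mul_re, Complex.exp_ofReal_mul_I_re, Complex.exp_ofReal_mul_I_im]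
    simp [← Complex.ofReal_pow]
  have hQ := gf_Q_pos r θ hr
  have hval : ((1-z)⁻¹).re = (1 - r*Real.cos θ)/(1 - 2*r*Real.cos θ + r^2) := by
    rw [Complex.inv_re, Complex.normSq_apply]
    have e1 : (1-z).re = 1 - r * Real.cos θ := by simp [hzre]
    have e2 : (1-z).im = -(r * Real.sin θ) := by simp [hzim]
    rw [e1, e2]
    have hsc : Real.sin θ ^2 + Real.cos θ ^2 = 1 := Real.sin_sq_add_cos_sq θ
    have : (1 - r*Real.cos θ) * (1 - r*Real.cos θ) + (-(r*Real.sin θ)) * (-(r*Real.sin θ))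
        = 1 - 2*r*Real.cos θ + r^2 := by nlinarith [hsc]
    rw [this]
  have h2 : HasSum (fun k : ℕ => 2 * (Complex.reCLM (z^k)))
      (2 * (Complex.reCLM ((1-z)⁻¹))) := hre.mul_left 2
  have h0 : HasSum (fun k : ℕ => if k = 0 then (1:ℝ) else 0) 1 := hasSum_ite_eq 0 1
  have h3 := h2.sub h0
  have hfun : (fun k : ℕ => 2 * (Complex.reCLM (z^k)) - (if k = 0 then (1:ℝ) else 0))
      = fun k : ℕ => (if k = 0 then 1 else 2) * r^k * Real.cos (k*θ) := by
    funext k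
    simp only [Complex.reCLM_apply, hterm k]
    rcases eq_or_ne k 0 with h | h <;> simp [h] <;> ring
  rw [hfun] at h3
  have hvv : 2 * (Complex.reCLM ((1-z)⁻¹)) - 1 = (1-r^2)/(1-2*r*Real.cos θ + r^2) := by
    simp only [Complex.reCLM_apply, hval]
    field_simp
    ring
  rwa [hvv] at h3


/-- Explicit Green's function of the infinite pinned chain: for real `λ` with
`λ + ω₀² > 0` and `ξ = 1 + (λ+ω₀²)/2 + √((λ+ω₀²)(λ+ω₀²+4))/2`, one has `ξ > 1` and
`∫₀¹ cos(2πux)/(λ + 4sin²(πu) + ω₀²) du = ξ^{-|x|} / √((λ+ω₀²)(λ+ω₀²+4))` on `ℤ`;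
in particular `G_λ` decays exponentially in `|x|`. -/
theorem green_function_explicit (ω0 lam : ℝ) (h0 : 0 < ω0) (hl : 0 < lam + ω0 ^ 2) :
    1 < 1 + (lam + ω0 ^ 2) / 2 + Real.sqrt ((lam + ω0 ^ 2) * (lam + ω0 ^ 2 + 4)) / 2 ∧
    ∀ x : ℤ,
      (∫ u in (0 : ℝ)..1, Real.cos (2 * Real.pi * u * (x : ℝ)) /
          (lam + 4 * Real.sin (Real.pi * u) ^ 2 + ω0 ^ 2)) =
        (1 + (lam + ω0 ^ 2) / 2 + Real.sqrt ((lam + ω0 ^ 2) * (lam + ω0 ^ 2 + 4)) / 2)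
            ^ (-(|x| : ℤ)) /
          Real.sqrt ((lam + ω0 ^ 2) * (lam + ω0 ^ 2 + 4)) := by
  set m : ℝ := lam + ω0 ^ 2 with hm_def
  have hm : 0 < m := hl
  have hD : 0 < m * (m + 4) := by nlinarith
  set s : ℝ := Real.sqrt (m * (m + 4)) with hs_def
  have hs : 0 < s := Real.sqrt_pos.mpr hD
  have hs2 : s ^ 2 = m * (m + 4) := Real.sq_sqrt hD.le
  set ξ : ℝ := 1 + m / 2 + s / 2 with hξ_def
  set r : ℝ := 1 + m / 2 - s / 2 with hr_def
  have hξ1 : 1 < ξ := by rw [hξ_def]; nlinarith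
  have hprod : ξ * r = 1 := by rw [hξ_def, hr_def]; linear_combination (-(1:ℝ)/4) * hs2
  have hr_pos : 0 < r := by
    rcases lt_trichotomy r 0 with h | h | h
    · nlinarith
    · exfalso; rw [h, mul_zero] at hprod; norm_num at hprod
    · exact h
  have hr1 : r < 1 := by
    have : 1 * r < ξ * r := by exact mul_lt_mul_of_pos_right hξ1 hr_pos
    rw [one_mul, hprod] at this; exact this
  have hr_abs : |r| < 1 := by rw [abs_of_pos hr_pos]; exact hr1
  have h1r : 1 - r ^ 2 = r * s := by
    rw [hr_def]; linear_combination ((1:ℝ)/4) * hs2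
  have hden : ∀ u : ℝ, lam + 4 * Real.sin (π * u) ^ 2 + ω0 ^ 2
      = m + 2 - 2 * Real.cos (2 * π * u) := by
    intro u
    have h1 : Real.cos (2 * π * u) = 2 * Real.cos (π * u) ^ 2 - 1 := by
      rw [show 2 * π * u = 2 * (π * u) by ring]; exact Real.cos_two_mul (π * u)
    have h2 : Real.sin (π * u) ^ 2 = 1 - Real.cos (π * u) ^ 2 := Real.sin_sq (π * u)
    rw [hm_def] at *
    nlinarith [h1, h2]
  have hden_pos : ∀ u : ℝ, 0 < lam + 4 * Real.sin (π * u) ^ 2 + ω0 ^ 2 := by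
    intro u
    have := Real.cos_le_one (2 * π * u)
    rw [hden u]; nlinarith
  have hQd : ∀ u : ℝ, 1 - 2 * r * Real.cos (2 * π * u) + r ^ 2
      = r * (lam + 4 * Real.sin (π * u) ^ 2 + ω0 ^ 2) := by
    intro u
    rw [hden u, hr_def]
    linear_combination ((1:ℝ)/4) * hs2
  refine ⟨hξ1, fun x => ?_⟩
  have hcosx : ∀ u : ℝ, Real.cos (2 * π * u * (x : ℝ))
      = Real.cos (2 * π * (x.natAbs : ℝ) * u) := by
    intro u
    have habs : ((x.natAbs : ℕ) : ℝ) = |(x : ℝ)| := by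
      rw [Nat.cast_natAbs]
      exact Int.cast_abs
    rw [habs]
    rcases abs_choice ((x : ℝ)) with h | h <;> rw [h]
    · congr 1; ring
    · rw [show 2 * π * (-(x:ℝ)) * u = -(2 * π * u * (x:ℝ)) by ring, Real.cos_neg]
  set n : ℕ := x.natAbs with hn_def
  have hxabs : (|x| : ℤ) = (n : ℤ) := Int.abs_eq_natAbs x
  -- coefficients
  set c : ℕ → ℝ := fun k => (if k = 0 then 1 else 2) * r ^ k / s with hc_def
  have key : ∀ u : ℝ, HasSum (fun k : ℕ => c k * (Real.cos (2 * π * k * u) * Real.cos (2 * π * n * u)))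
      (Real.cos (2 * π * u * (x : ℝ)) / (lam + 4 * Real.sin (π * u) ^ 2 + ω0 ^ 2)) := by
    intro u
    have hp := ((gf_poisson r (2 * π * u) hr_abs).div_const s).mul_right (Real.cos (2 * π * n * u))
    have hshape : (fun k : ℕ => ((if k = 0 then 1 else 2) * r ^ k * Real.cos (k * (2 * π * u))) / s
          * Real.cos (2 * π * n * u))
        = fun k : ℕ => c k * (Real.cos (2 * π * k * u) * Real.cos (2 * π * n * u)) := by
      funext k
      rw [show (k : ℝ) * (2 * π * u) = 2 * π * k * u by ring, hc_def]
      ring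
    rw [hshape] at hp
    convert hp using 1
    · rfl
    rw [hcosx u, h1r, hQd u]
    have hd := (hden_pos u).ne'
    field_simp
  have hF_int : ∀ k : ℕ, (∫ u in (0:ℝ)..1,
        c k * (Real.cos (2 * π * k * u) * Real.cos (2 * π * n * u)))
      = if k = n then r ^ n / s else 0 := by
    intro k
    rw [intervalIntegral.integral_const_mul, gf_cos_ortho k n]
    rcases eq_or_ne k n with h | h
    · rw [if_pos h, if_pos h, h]
      rcases eq_or_ne n 0 with hn0 | hn0
      · rw [if_pos hn0, hc_def]
        simp [hn0]
      · rw [if_neg hn0, hc_def]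
        simp only [if_neg hn0]
        ring
    · rw [if_neg h, if_neg h, mul_zero]
  have hsum : HasSum (fun k : ℕ => ∫ u in (0:ℝ)..1,
        c k * (Real.cos (2 * π * k * u) * Real.cos (2 * π * n * u)))
      (∫ u in (0:ℝ)..1, Real.cos (2 * π * u * (x : ℝ)) /
        (lam + 4 * Real.sin (π * u) ^ 2 + ω0 ^ 2)) := by
    apply intervalIntegral.hasSum_integral_of_dominated_convergence
      (bound := fun k (_ : ℝ) => (2 / s) * r ^ k)
    · intro k
      exact Continuous.aestronglyMeasurable (by fun_prop)
    · intro k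
      filter_upwards with t _
      have h1 : |c k| ≤ 2 * r ^ k / s := by
        rw [hc_def]
        rw [abs_of_nonneg (by positivity)]
        rcases eq_or_ne k 0 with h | h
        · simp [h]
          rw [inv_eq_one_div]
          exact (div_le_div_iff_of_pos_right hs).mpr one_le_two
        · simp [h]
      calc ‖c k * (Real.cos (2 * π * k * t) * Real.cos (2 * π * n * t))‖
          = |c k| * (|Real.cos (2 * π * k * t)| * |Real.cos (2 * π * n * t)|) := by
            rw [Real.norm_eq_abs, abs_mul, abs_mul]
        _ ≤ (2 * r ^ k / s) * (1 * 1) := by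
            apply mul_le_mul h1 _ (by positivity) (by positivity)
            exact mul_le_mul (Real.abs_cos_le_one _) (Real.abs_cos_le_one _)
              (abs_nonneg _) zero_le_one
        _ = (2 / s) * r ^ k := by ring
    · filter_upwards with t _
      exact (summable_geometric_of_lt_one hr_pos.le hr1).mul_left _
    · exact intervalIntegrable_const
    · filter_upwards with t _
      exact key t
  rw [funext hF_int] at hsum
  have hsum2 : HasSum (fun k : ℕ => if k = n then r ^ n / s else 0) (r ^ n / s) := by
    exact hasSum_ite_eq n (r ^ n / s)
  have hval := hsum2.unique hsum
  rw [← hval, hxabs]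
  have hrξ : r = ξ⁻¹ := by
    field_simp
    linarith [hprod, mul_comm ξ r]
  rw [hrξ, zpow_neg, zpow_natCast, inv_pow]
end

section
/- Perturbative contraction: suppose ω, ω_0 > 0 with δ_* = inf{|(mω)² - w²| : m ∈ ℤ, w ∈ [ω_0, √(ω_0²+4)]} > 0, and let q, v : Z_N → ℂ (for fixed m ∈ ℤ) satisfy [Δ + (mω)² - ω_0² - iγmω(δ_{-N} + δ_N)] q_x = v_x for all x ∈ Z_N (Neumann Laplacian, γ ≥ 0). Then δ_* · ∑_{x∈Z_N} |q_x|² ≤ (∑_x |v_x|²)^{1/2} (∑_x |q_x|²)^{1/2}, i.e. ‖q‖ ≤ ‖v‖/δ_*. -/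
open Finset Complex

private lemma icc_insert_top (a b : ℤ) (h : a ≤ b) :
    Finset.Icc a b = insert b (Finset.Icc a (b - 1)) := by
  ext x; simp only [Finset.mem_Icc, Finset.mem_insert]; omega

private lemma icc_insert_bot (a b : ℤ) (h : a ≤ b) :
    Finset.Icc a b = insert a (Finset.Icc (a + 1) b) := by
  ext x; simp only [Finset.mem_Icc, Finset.mem_insert]; omega

private lemma sum_shift {M : Type*} [AddCommMonoid M] (a b : ℤ) (f : ℤ → M) :
    ∑ x ∈ Finset.Icc a b, f x = ∑ x ∈ Finset.Icc (a - 1) (b - 1), f (x + 1) := by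
  have : Finset.Icc a b = Finset.map (addLeftEmbedding 1) (Finset.Icc (a - 1) (b - 1)) := by
    rw [Finset.map_add_left_Icc]; congr 1 <;> ring
  rw [this, Finset.sum_map]
  refine Finset.sum_congr rfl fun x _ => ?_
  simp [addLeftEmbedding, add_comm]

/-- summation by parts with Neumann BC -/
private lemma sbp (N : ℕ) (q : ℤ → ℂ)
    (hqR : q ((N : ℤ) + 1) = q (N : ℤ)) (hqL : q (-(N : ℤ) - 1) = q (-(N : ℤ))) :
    ∑ x ∈ Finset.Icc (-(N : ℤ)) (N : ℤ),
      (q (x + 1) + q (x - 1) - 2 * q x) * (starRingEnd ℂ) (q x)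
    = - ∑ x ∈ Finset.Icc (-(N : ℤ)) ((N : ℤ) - 1),
        (q (x + 1) - q x) * (starRingEnd ℂ) (q (x + 1) - q x) := by
  have hab : -(N : ℤ) ≤ (N : ℤ) := by omega
  have key : ∀ x : ℤ, (q (x + 1) + q (x - 1) - 2 * q x) * (starRingEnd ℂ) (q x)
      = (q (x + 1) - q x) * (starRingEnd ℂ) (q x)
        - (q x - q (x - 1)) * (starRingEnd ℂ) (q x) := by
    intro x; ring
  rw [Finset.sum_congr rfl fun x _ => key x, Finset.sum_sub_distrib]
  -- first sum : drop top term
  have hA : ∑ x ∈ Finset.Icc (-(N : ℤ)) (N : ℤ), (q (x + 1) - q x) * (starRingEnd ℂ) (q x)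
      = ∑ x ∈ Finset.Icc (-(N : ℤ)) ((N : ℤ) - 1), (q (x + 1) - q x) * (starRingEnd ℂ) (q x) := by
    rw [icc_insert_top _ _ hab, Finset.sum_insert (by simp)]
    rw [hqR]; ring_nf
  -- second sum : shift, drop bottom term
  have hB : ∑ x ∈ Finset.Icc (-(N : ℤ)) (N : ℤ), (q x - q (x - 1)) * (starRingEnd ℂ) (q x)
      = ∑ x ∈ Finset.Icc (-(N : ℤ)) ((N : ℤ) - 1), (q (x + 1) - q x) * (starRingEnd ℂ) (q (x + 1)) := by
    rw [sum_shift]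
    have h2 : -(N : ℤ) - 1 ≤ (N : ℤ) - 1 := by omega
    rw [icc_insert_bot _ _ h2, Finset.sum_insert (by simp)]
    have e1 : -(N : ℤ) - 1 + 1 = -(N : ℤ) := by ring
    rw [e1]
    have hbot : q (-(N : ℤ)) - q (-(N : ℤ) - 1) = 0 := by rw [hqL, sub_self]
    rw [hbot, zero_mul, zero_add]
    refine Finset.sum_congr rfl fun x _ => ?_
    congr 2 <;> ring_nf
  rw [hA, hB, ← Finset.sum_neg_distrib, ← Finset.sum_sub_distrib]
  refine Finset.sum_congr rfl fun x _ => ?_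
  rw [map_sub]; ring

/-- Perturbative contraction: suppose `δ_* = inf {|(mω)² - w²| : m ∈ ℤ, w ∈ [ω₀, √(ω₀²+4)]}`
is positive, and `q, v : Z_N → ℂ` satisfy, for a fixed `m ∈ ℤ`,
`[Δ + (mω)² - ω₀² - iγmω(δ_{-N} + δ_N)] q = v` on `Z_N` (Neumann Laplacian, `γ ≥ 0`).
Then `δ_* ∑ |q_x|² ≤ (∑ |v_x|²)^{1/2} (∑ |q_x|²)^{1/2}`. -/
theorem perturbative_contraction (N : ℕ) (ω ω0 γ : ℝ)
    (hω : 0 < ω) (h0 : 0 < ω0) (hγ : 0 ≤ γ)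
    (δstar : ℝ)
    (hδdef : δstar = sInf {d : ℝ | ∃ m : ℤ, ∃ w ∈ Set.Icc ω0 (Real.sqrt (ω0 ^ 2 + 4)),
        d = |((m : ℝ) * ω) ^ 2 - w ^ 2|})
    (hδ : 0 < δstar)
    (m : ℤ) (q v : ℤ → ℂ)
    (hqR : q ((N : ℤ) + 1) = q (N : ℤ)) (hqL : q (-(N : ℤ) - 1) = q (-(N : ℤ)))
    (heq : ∀ x ∈ Finset.Icc (-(N : ℤ)) (N : ℤ),
      (q (x + 1) + q (x - 1) - 2 * q x)
        + ((((m : ℝ) * ω) ^ 2 - ω0 ^ 2 : ℝ) : ℂ) * q x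
        - Complex.I * (γ : ℂ) * (m : ℂ) * (ω : ℂ) *
            (((if x = -(N : ℤ) then 1 else 0) + (if x = (N : ℤ) then 1 else 0) : ℂ)) * q x
      = v x) :
    δstar * ∑ x ∈ Finset.Icc (-(N : ℤ)) (N : ℤ), ‖q x‖ ^ 2 ≤
      Real.sqrt (∑ x ∈ Finset.Icc (-(N : ℤ)) (N : ℤ), ‖v x‖ ^ 2) *
      Real.sqrt (∑ x ∈ Finset.Icc (-(N : ℤ)) (N : ℤ), ‖q x‖ ^ 2) := by
  classical
  set S := Finset.Icc (-(N : ℤ)) (N : ℤ) with hS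
  set Q : ℝ := ∑ x ∈ S, ‖q x‖ ^ 2 with hQdef
  have hQ0 : 0 ≤ Q := Finset.sum_nonneg fun x _ => by positivity
  rcases eq_or_lt_of_le hQ0 with hQz | hQpos
  · rw [← hQz, mul_zero]; positivity
  set lam : ℝ := ((m : ℝ) * ω) ^ 2 - ω0 ^ 2 with hlam
  set D : ℝ := ∑ x ∈ Finset.Icc (-(N : ℤ)) ((N : ℤ) - 1), ‖q (x + 1) - q x‖ ^ 2 with hD
  have hD0 : 0 ≤ D := Finset.sum_nonneg fun x _ => by positivity
  set P : ℂ := ∑ x ∈ S, v x * (starRingEnd ℂ) (q x) with hP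
  have hcplx : ∀ (z : ℂ), z * (starRingEnd ℂ) z = ((‖z‖ ^ 2 : ℝ) : ℂ) := by
    intro z
    rw [Complex.mul_conj, Complex.normSq_eq_norm_sq]
  -- real part identity : Re P = lam * Q - D
  have hRe : P.re = lam * Q - D := by
    have hPsum : P = ∑ x ∈ S,
        ((q (x + 1) + q (x - 1) - 2 * q x) * (starRingEnd ℂ) (q x)
          + (lam : ℂ) * ((‖q x‖ ^ 2 : ℝ) : ℂ)
          - Complex.I * (γ : ℂ) * (m : ℂ) * (ω : ℂ) *
              (((if x = -(N : ℤ) then 1 else 0) + (if x = (N : ℤ) then 1 else 0) : ℂ)) *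
              ((‖q x‖ ^ 2 : ℝ) : ℂ)) := by
      refine Finset.sum_congr rfl fun x hx => ?_
      rw [← heq x hx, ← hcplx (q x)]
      ring
    have h1 : ∑ x ∈ S, (q (x + 1) + q (x - 1) - 2 * q x) * (starRingEnd ℂ) (q x)
        = -((D : ℝ) : ℂ) := by
      rw [hS, sbp N q hqR hqL]
      congr 1
      rw [hD, Complex.ofReal_sum]
      exact Finset.sum_congr rfl fun x _ => hcplx _
    have h2 : ∑ x ∈ S, (lam : ℂ) * ((‖q x‖ ^ 2 : ℝ) : ℂ) = ((lam * Q : ℝ) : ℂ) := by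
      rw [← Finset.mul_sum, ← Complex.ofReal_sum, ← hQdef]
      push_cast
      ring
    have h3 : ∀ x : ℤ, (Complex.I * (γ : ℂ) * (m : ℂ) * (ω : ℂ) *
        (((if x = -(N : ℤ) then 1 else 0) + (if x = (N : ℤ) then 1 else 0) : ℂ)) *
        ((‖q x‖ ^ 2 : ℝ) : ℂ)).re = 0 := by
      intro x
      split_ifs <;>
        simp [Complex.mul_re, Complex.mul_im, Complex.I_re, Complex.I_im,
          ← Complex.ofReal_pow, Complex.ofReal_im]
    rw [hPsum, Finset.sum_sub_distrib, Finset.sum_add_distrib, h1, h2]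
    rw [Complex.sub_re, Complex.add_re]
    rw [Complex.re_sum]
    simp only [h3, Finset.sum_const_zero, Complex.neg_re, Complex.ofReal_re, sub_zero]
    ring
  -- bound D ≤ 4 Q
  have hD4 : D ≤ 4 * Q := by
    have step1 : D ≤ ∑ x ∈ Finset.Icc (-(N : ℤ)) ((N : ℤ) - 1),
        (2 * ‖q (x + 1)‖ ^ 2 + 2 * ‖q x‖ ^ 2) := by
      refine Finset.sum_le_sum fun x _ => ?_
      have h1 : ‖q (x + 1) - q x‖ ≤ ‖q (x + 1)‖ + ‖q x‖ := norm_sub_le _ _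
      nlinarith [norm_nonneg (q (x + 1) - q x), norm_nonneg (q (x + 1)), norm_nonneg (q x),
        sq_nonneg (‖q (x + 1)‖ - ‖q x‖)]
    have sub1 : ∑ x ∈ Finset.Icc (-(N : ℤ)) ((N : ℤ) - 1), ‖q (x + 1)‖ ^ 2 ≤ Q := by
      have : ∑ x ∈ Finset.Icc (-(N : ℤ)) ((N : ℤ) - 1), ‖q (x + 1)‖ ^ 2
          = ∑ x ∈ Finset.Icc (-(N : ℤ) + 1) ((N : ℤ)), ‖q x‖ ^ 2 := by
        rw [sum_shift (-(N : ℤ) + 1) (N : ℤ) (fun x => ‖q x‖ ^ 2)]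
        congr 1
        congr 1 <;> ring
      rw [this, hQdef, hS]
      refine Finset.sum_le_sum_of_subset_of_nonneg (Finset.Icc_subset_Icc (by omega) le_rfl)
        fun x _ _ => by positivity
    have sub2 : ∑ x ∈ Finset.Icc (-(N : ℤ)) ((N : ℤ) - 1), ‖q x‖ ^ 2 ≤ Q := by
      rw [hQdef, hS]
      refine Finset.sum_le_sum_of_subset_of_nonneg (Finset.Icc_subset_Icc le_rfl (by omega))
        fun x _ _ => by positivity
    calc D ≤ _ := step1
      _ = 2 * (∑ x ∈ Finset.Icc (-(N : ℤ)) ((N : ℤ) - 1), ‖q (x + 1)‖ ^ 2)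
          + 2 * (∑ x ∈ Finset.Icc (-(N : ℤ)) ((N : ℤ) - 1), ‖q x‖ ^ 2) := by
        rw [Finset.sum_add_distrib, Finset.mul_sum, Finset.mul_sum]
      _ ≤ 2 * Q + 2 * Q := by gcongr
      _ = 4 * Q := by ring
  -- δ* ≤ |lam - D/Q|
  set r : ℝ := D / Q with hr
  have hr0 : 0 ≤ r := div_nonneg hD0 hQ0
  have hr4 : r ≤ 4 := (div_le_iff₀ hQpos).mpr (by linarith)
  have hw2 : ω0 ^ 2 + r ≥ 0 := by positivity
  have hδle : δstar ≤ |lam - r| := by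
    rw [hδdef]
    have hbdd : BddBelow {d : ℝ | ∃ m : ℤ, ∃ w ∈ Set.Icc ω0 (Real.sqrt (ω0 ^ 2 + 4)),
        d = |((m : ℝ) * ω) ^ 2 - w ^ 2|} := by
      refine ⟨0, fun d hd => ?_⟩
      obtain ⟨m', w, _, hdw⟩ := hd
      rw [hdw]; exact abs_nonneg _
    refine csInf_le hbdd ?_
    refine ⟨m, Real.sqrt (ω0 ^ 2 + r), ⟨?_, ?_⟩, ?_⟩
    · calc ω0 = Real.sqrt (ω0 ^ 2) := (Real.sqrt_sq h0.le).symm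
        _ ≤ Real.sqrt (ω0 ^ 2 + r) := Real.sqrt_le_sqrt (by linarith)
    · exact Real.sqrt_le_sqrt (by linarith)
    · rw [Real.sq_sqrt hw2, hlam]
      congr 1
      ring
  -- δ* Q ≤ |lam Q - D|
  have hQne : Q ≠ 0 := ne_of_gt hQpos
  have key : δstar * Q ≤ |lam * Q - D| := by
    calc δstar * Q ≤ |lam - r| * Q := by
          exact mul_le_mul_of_nonneg_right hδle hQ0
      _ = |(lam - r) * Q| := by
          rw [abs_mul, _root_.abs_of_nonneg hQ0]
      _ = |lam * Q - D| := by
          congr 1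
          rw [hr]
          field_simp
  -- |Re P| ≤ ‖P‖ ≤ ∑ ‖v‖‖q‖ ≤ √∑‖v‖² √∑‖q‖²
  have hPnorm : ‖P‖ ≤ ∑ x ∈ S, ‖v x‖ * ‖q x‖ := by
    calc ‖P‖ ≤ ∑ x ∈ S, ‖v x * (starRingEnd ℂ) (q x)‖ := norm_sum_le _ _
      _ = ∑ x ∈ S, ‖v x‖ * ‖q x‖ := by
          refine Finset.sum_congr rfl fun x _ => ?_
          rw [norm_mul, RCLike.norm_conj]
  have hCS : ∑ x ∈ S, ‖v x‖ * ‖q x‖ ≤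
      Real.sqrt (∑ x ∈ S, ‖v x‖ ^ 2) * Real.sqrt (∑ x ∈ S, ‖q x‖ ^ 2) := by
    have h := Finset.sum_mul_sq_le_sq_mul_sq S (fun x => ‖v x‖) (fun x => ‖q x‖)
    have hnn : 0 ≤ ∑ x ∈ S, ‖v x‖ * ‖q x‖ :=
      Finset.sum_nonneg fun x _ => mul_nonneg (norm_nonneg _) (norm_nonneg _)
    calc ∑ x ∈ S, ‖v x‖ * ‖q x‖ = Real.sqrt ((∑ x ∈ S, ‖v x‖ * ‖q x‖) ^ 2) :=
          (Real.sqrt_sq hnn).symm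
      _ ≤ Real.sqrt ((∑ x ∈ S, ‖v x‖ ^ 2) * ∑ x ∈ S, ‖q x‖ ^ 2) := Real.sqrt_le_sqrt h
      _ = _ := Real.sqrt_mul (Finset.sum_nonneg fun x _ => by positivity) _
  have habs : |lam * Q - D| ≤ ‖P‖ := by
    rw [← hRe]
    exact Complex.abs_re_le_norm P
  calc δstar * Q ≤ |lam * Q - D| := key
    _ ≤ ‖P‖ := habs
    _ ≤ ∑ x ∈ S, ‖v x‖ * ‖q x‖ := hPnorm
    _ ≤ _ := hCS
end
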